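/- arXiv:1212.1932 — 2 statements merged into one kernel-verified Lean document; each statement's English description precedes it below -/
import Mathlib

section
/- Let K be a compact metric space, let n, m ≥ 1, and let G : ℝⁿ × K → ℝᵐ be continuous, differentiable in its first argument at every point, with the partial derivative ∂₁G : ℝⁿ × K → L(ℝⁿ, ℝᵐ) jointly continuous. Consider the Nemytsky (substitution) operator 𝒩 : C(K, ℝⁿ) → C(K, ℝᵐ) defined by 𝒩(μ)(x) = G(μ(x), x), where the spaces of continuous functions carry the supremum norm. Then 𝒩 is continuously Fréchet differentiable, and its Fréchet derivative at μ ∈ C(K, ℝⁿ) is the bounded linear operator sending h ∈ C(K, ℝⁿ) to the function x ↦ ∂₁G(μ(x), x)·h(x). -/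
open Set

section Aux

variable {K : Type*} [MetricSpace K] [CompactSpace K]
variable {E F : Type*} [NormedAddCommGroup E] [NormedSpace ℝ E]
  [NormedAddCommGroup F] [NormedSpace ℝ F]

/-- Pointwise application of a continuous family of operators. -/
noncomputable def nemAux (A : C(K, E →L[ℝ] F)) (h : C(K, E)) : C(K, F) :=
  ⟨fun x => A x (h x),
    isBoundedBilinearMap_apply.continuous.comp (A.continuous.prodMk h.continuous)⟩

theorem nemAux_norm (A : C(K, E →L[ℝ] F)) (h : C(K, E)) :
    ‖nemAux A h‖ ≤ ‖A‖ * ‖h‖ := by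
  refine ContinuousMap.norm_le _ (by positivity) |>.2 fun x => ?_
  calc ‖A x (h x)‖ ≤ ‖A x‖ * ‖h x‖ := (A x).le_opNorm (h x)
    _ ≤ ‖A‖ * ‖h‖ := by
        gcongr
        · exact A.norm_coe_le_norm x
        · exact h.norm_coe_le_norm x

/-- Pointwise application as a continuous linear map in the vector argument. -/
noncomputable def nemCLM (A : C(K, E →L[ℝ] F)) : C(K, E) →L[ℝ] C(K, F) :=
  LinearMap.mkContinuous
    { toFun := nemAux A
      map_add' := fun h₁ h₂ => ContinuousMap.ext fun x => by simp [nemAux]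
      map_smul' := fun c h => ContinuousMap.ext fun x => by simp [nemAux] }
    ‖A‖ (fun h => nemAux_norm A h)

@[simp] theorem nemCLM_apply (A : C(K, E →L[ℝ] F)) (h : C(K, E)) (x : K) :
    nemCLM A h x = A x (h x) := rfl

theorem nemCLM_norm_le (A : C(K, E →L[ℝ] F)) : ‖nemCLM A‖ ≤ ‖A‖ :=
  ContinuousLinearMap.opNorm_le_bound _ (norm_nonneg A) (fun h => nemAux_norm A h)

theorem nemCLM_lipschitz :
    LipschitzWith 1 (nemCLM : C(K, E →L[ℝ] F) → (C(K, E) →L[ℝ] C(K, F))) := by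
  apply LipschitzWith.of_dist_le_mul
  intro A B
  rw [NNReal.coe_one, one_mul]
  have hsub : nemCLM A - nemCLM B = nemCLM (A - B) :=
    ContinuousLinearMap.ext fun h => ContinuousMap.ext fun x => by simp
  calc dist (nemCLM A) (nemCLM B) = ‖nemCLM A - nemCLM B‖ := dist_eq_norm _ _
    _ = ‖nemCLM (A - B)‖ := by rw [hsub]
    _ ≤ ‖A - B‖ := nemCLM_norm_le _
    _ = dist A B := (dist_eq_norm A B).symm

end Aux

/-- **C¹-smoothness of the Nemytsky (substitution) operator.**
If `G : ℝⁿ × K → ℝᵐ` is continuous, differentiable in its first argument with jointly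
continuous partial derivative `DG`, then the substitution operator
`𝒩(μ)(x) = G(μ(x), x)` on the Banach space `C(K, ℝⁿ)` (sup norm, `K` compact metric)
is continuously Fréchet differentiable, with derivative at `μ` the bounded linear
operator `h ↦ (x ↦ DG(μ(x), x)·h(x))`. -/
theorem nemytsky_operator_C1
    (n m : ℕ) (hn : 1 ≤ n) (hm : 1 ≤ m)
    {K : Type*} [MetricSpace K] [CompactSpace K]
    (G : EuclideanSpace ℝ (Fin n) × K → EuclideanSpace ℝ (Fin m))
    (DG : EuclideanSpace ℝ (Fin n) × K →
      (EuclideanSpace ℝ (Fin n) →L[ℝ] EuclideanSpace ℝ (Fin m)))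
    (hG : Continuous G) (hDG : Continuous DG)
    (hDeriv : ∀ (y : EuclideanSpace ℝ (Fin n)) (x : K),
      HasFDerivAt (fun z => G (z, x)) (DG (y, x)) y)
    (N : C(K, EuclideanSpace ℝ (Fin n)) → C(K, EuclideanSpace ℝ (Fin m)))
    (hN : ∀ μ x, N μ x = G (μ x, x)) :
    ∃ N' : C(K, EuclideanSpace ℝ (Fin n)) →
        (C(K, EuclideanSpace ℝ (Fin n)) →L[ℝ] C(K, EuclideanSpace ℝ (Fin m))),
      Continuous N' ∧
      (∀ μ, HasFDerivAt N (N' μ) μ) ∧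
      (∀ μ h x, N' μ h x = DG (μ x, x) (h x)) := by
  let E := EuclideanSpace ℝ (Fin n)
  let F := EuclideanSpace ℝ (Fin m)
  -- the family of derivative operators along μ, as a continuous map
  let D : C(K, E) → C(K, E →L[ℝ] F) := fun μ =>
    (⟨DG, hDG⟩ : C(E × K, E →L[ℝ] F)).comp (μ.prodMk (ContinuousMap.id K))
  have hDapply : ∀ μ x, D μ x = DG (μ x, x) := fun μ x => rfl
  refine ⟨fun μ => nemCLM (D μ), ?_, ?_, fun μ h x => rfl⟩
  · -- continuity of the derivative map
    have h1 : Continuous D := by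
      apply (ContinuousMap.continuous_postcomp _).comp
      have : LipschitzWith 1 fun μ : C(K, E) => μ.prodMk (ContinuousMap.id K) := by
        intro μ ν
        simp only [ENNReal.coe_one, one_mul]
        rw [edist_dist, edist_dist]
        apply ENNReal.ofReal_le_ofReal
        refine (ContinuousMap.dist_le dist_nonneg).2 fun x => ?_
        simp only [ContinuousMap.prod_eval, Prod.dist_eq, ContinuousMap.id_apply, dist_self]
        exact max_le (ContinuousMap.dist_apply_le_dist x) dist_nonneg
      exact this.continuous
    exact (nemCLM_lipschitz.continuous).comp h1
  · -- differentiability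
    intro μ
    rw [hasFDerivAt_iff_isLittleO_nhds_zero]
    rw [Asymptotics.isLittleO_iff]
    intro c hc
    -- uniform continuity of DG on a compact neighborhood of the graph of μ
    have hT : IsCompact ((Metric.cthickening 1 (Set.range μ)) ×ˢ (Set.univ : Set K)) :=
      ((isCompact_range μ.continuous).cthickening).prod isCompact_univ
    have hUC := hT.uniformContinuousOn_of_continuous hDG.continuousOn
    rw [Metric.uniformContinuousOn_iff] at hUC
    obtain ⟨δ₀, hδ₀, hδ⟩ := hUC c hc
    set δ := min δ₀ 1 with hδdef
    have hδpos : 0 < δ := lt_min hδ₀ zero_lt_one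
    filter_upwards [Metric.ball_mem_nhds 0 hδpos] with h hh
    rw [Metric.mem_ball, dist_zero_right] at hh
    have hhle : ‖h‖ < δ := hh
    have hmemT : ∀ x : K, ∀ z ∈ Metric.closedBall (μ x) ‖h‖,
        (z, x) ∈ (Metric.cthickening 1 (Set.range μ)) ×ˢ (Set.univ : Set K) := by
      intro x z hz
      refine ⟨Metric.mem_cthickening_of_dist_le z (μ x) 1 _ ⟨x, rfl⟩ ?_, trivial⟩
      exact le_trans (Metric.mem_closedBall.1 hz) (le_trans hhle.le (min_le_right _ _))
    -- pointwise mean value estimate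
    have key : ∀ x : K, ‖G (μ x + h x, x) - G (μ x, x) - DG (μ x, x) (h x)‖ ≤ c * ‖h‖ := by
      intro x
      have hconv : Convex ℝ (Metric.closedBall (μ x) ‖h‖) := convex_closedBall _ _
      have hmem₁ : μ x ∈ Metric.closedBall (μ x) ‖h‖ := by
        simp [norm_nonneg]
      have hmem₂ : μ x + h x ∈ Metric.closedBall (μ x) ‖h‖ := by
        rw [Metric.mem_closedBall, dist_eq_norm, add_sub_cancel_left]
        exact h.norm_coe_le_norm x
      have bound : ∀ z ∈ Metric.closedBall (μ x) ‖h‖,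
          ‖DG (z, x) - DG (μ x, x)‖ ≤ c := by
        intro z hz
        have hdist : dist ((z, x) : E × K) ((μ x, x) : E × K) < δ₀ := by
          rw [Prod.dist_eq]
          simp only [dist_self]
          have h1 : dist z (μ x) < δ := lt_of_le_of_lt (Metric.mem_closedBall.1 hz) hhle
          exact max_lt (lt_of_lt_of_le h1 (min_le_left _ _)) hδ₀
        have := hδ (z, x) (hmemT x z hz) (μ x, x) (hmemT x (μ x) hmem₁) hdist
        rw [dist_eq_norm] at this
        exact this.le
      have hmv := hconv.norm_image_sub_le_of_norm_hasFDerivWithin_le'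
        (f := fun z => G (z, x)) (f' := fun z => DG (z, x)) (φ := DG (μ x, x)) (C := c)
        (fun z _ => (hDeriv z x).hasFDerivWithinAt) bound hmem₁ hmem₂
      simp only [add_sub_cancel_left] at hmv
      refine le_trans hmv ?_
      gcongr
      exact h.norm_coe_le_norm x
    -- assemble
    have hnorm : ‖N (μ + h) - N μ - (nemCLM (D μ)) h‖ ≤ c * ‖h‖ := by
      refine ContinuousMap.norm_le _ (by positivity) |>.2 fun x => ?_
      simp only [ContinuousMap.sub_apply, hN, ContinuousMap.add_apply, nemCLM_apply, hDapply]
      exact key x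
    simpa using hnorm
end

section
/- Let C be a nonempty finite type (the set of symbols), let λ ∈ [0, 1), and for each pair (c, c′) ∈ C × C let f_{cc′} : ℝ × ℝ → ℝ and g_{cc′} : ℝ × ℝ → ℝ be bounded functions such that the map (u, w) ↦ (f_{cc′}(u, w), g_{cc′}(u, w)) from ℝ² to ℝ² is Lipschitz with constant λ when ℝ² is equipped with the maximum metric. Then for every sequence of symbols ξ : ℤ → C there exists a unique bounded sequence {(u_i, w_i)}_{i ∈ ℤ} of points of ℝ² satisfying the cross-form relations u_i = f_{ξ_{i−1}ξ_i}(u_{i−1}, w_i) and w_i = g_{ξ_iξ_{i+1}}(u_i, w_{i+1}) for all i ∈ ℤ. -/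
open Set BoundedContinuousFunction

/-- **Existence and uniqueness of the orbit with a prescribed code.** Given
cross-form maps `(f_{cc′}, g_{cc′}) : ℝ² → ℝ²` (max metric), bounded and Lipschitz
with constant `λ < 1`, every code `ξ : ℤ → C` determines a unique bounded sequence
`{(u_i, w_i)}_{i∈ℤ}` in `ℝ²` satisfying the cross-form relations
`u_i = f_{ξ_{i−1}ξ_i}(u_{i−1}, w_i)` and `w_i = g_{ξ_iξ_{i+1}}(u_i, w_{i+1})`.
(The norm on `ℝ × ℝ` is the maximum norm.) -/
theorem cross_form_unique_bounded_orbit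
    (C : Type*) [Finite C] [Nonempty C]
    (lam : NNReal) (hlam : lam < 1)
    (f g : C → C → ℝ → ℝ → ℝ)
    (hbdd : ∀ c c' : C, ∃ M : ℝ, ∀ u w : ℝ, |f c c' u w| ≤ M ∧ |g c c' u w| ≤ M)
    (hlip : ∀ c c' : C,
      LipschitzWith lam (fun p : ℝ × ℝ => ((f c c' p.1 p.2, g c c' p.1 p.2) : ℝ × ℝ)))
    (ξ : ℤ → C) :
    ∃! x : ℤ → ℝ × ℝ,
      (∃ M : ℝ, ∀ i : ℤ, ‖x i‖ ≤ M) ∧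
      ∀ i : ℤ,
        (x i).1 = f (ξ (i - 1)) (ξ i) (x (i - 1)).1 (x i).2 ∧
        (x i).2 = g (ξ i) (ξ (i + 1)) (x i).1 (x (i + 1)).2 := by
  classical
  haveI := Fintype.ofFinite C
  choose M hM using hbdd
  have hne : (Finset.univ : Finset (C × C)).Nonempty := Finset.univ_nonempty
  set M0 : ℝ := Finset.univ.sup' hne (fun p : C × C => M p.1 p.2) with hM0def
  have hM0 : ∀ c c' u w, |f c c' u w| ≤ M0 ∧ |g c c' u w| ≤ M0 := by
    intro c c' u w
    have h := hM c c' u w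
    have hle : M c c' ≤ M0 := Finset.le_sup' (fun p : C × C => M p.1 p.2)
      (Finset.mem_univ (c, c'))
    exact ⟨h.1.trans hle, h.2.trans hle⟩
  set F : (ℤ → ℝ × ℝ) → ℤ → ℝ × ℝ := fun x i =>
    (f (ξ (i - 1)) (ξ i) (x (i - 1)).1 (x i).2,
     g (ξ i) (ξ (i + 1)) (x i).1 (x (i + 1)).2) with hFdef
  have hFbd : ∀ (x : ℤ → ℝ × ℝ) (i : ℤ), ‖F x i‖ ≤ M0 := by
    intro x i
    rw [Prod.norm_def]
    exact max_le (by simpa [Real.norm_eq_abs] using (hM0 _ _ _ _).1)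
      (by simpa [Real.norm_eq_abs] using (hM0 _ _ _ _).2)
  set T : (ℤ →ᵇ (ℝ × ℝ)) → (ℤ →ᵇ (ℝ × ℝ)) := fun x =>
    BoundedContinuousFunction.ofNormedAddCommGroup (F ⇑x)
      continuous_of_discreteTopology M0 (hFbd ⇑x) with hTdef
  have hTcoe : ∀ (x : ℤ →ᵇ (ℝ × ℝ)) (i : ℤ), T x i = F ⇑x i := fun _ _ => rfl
  -- T is a contraction
  have hTlip : LipschitzWith lam T := by
    apply LipschitzWith.of_dist_le_mul
    intro x y
    apply BoundedContinuousFunction.dist_le (mul_nonneg lam.coe_nonneg dist_nonneg) |>.2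
    intro i
    have hcomp : ∀ j : ℤ, dist (x j).1 (y j).1 ≤ dist x y ∧
        dist (x j).2 (y j).2 ≤ dist x y := by
      intro j
      have h := BoundedContinuousFunction.dist_coe_le_dist (f := x) (g := y) j
      rw [Prod.dist_eq] at h
      exact ⟨le_trans (le_max_left _ _) h, le_trans (le_max_right _ _) h⟩
    rw [hTcoe, hTcoe, hFdef]
    rw [Prod.dist_eq]
    apply max_le
    · -- first component
      have h := (hlip (ξ (i - 1)) (ξ i)).dist_le_mul
        ((x (i - 1)).1, (x i).2) ((y (i - 1)).1, (y i).2)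
      rw [Prod.dist_eq] at h
      refine le_trans (le_trans (le_max_left _ _) h) ?_
      apply mul_le_mul_of_nonneg_left _ lam.coe_nonneg
      rw [Prod.dist_eq]
      exact max_le (hcomp (i - 1)).1 (hcomp i).2
    · have h := (hlip (ξ i) (ξ (i + 1))).dist_le_mul
        ((x i).1, (x (i + 1)).2) ((y i).1, (y (i + 1)).2)
      rw [Prod.dist_eq] at h
      refine le_trans (le_trans (le_max_right _ _) h) ?_
      apply mul_le_mul_of_nonneg_left _ lam.coe_nonneg
      rw [Prod.dist_eq]
      exact max_le (hcomp i).1 (hcomp (i + 1)).2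
  have hC : ContractingWith lam T := ⟨hlam, hTlip⟩
  set φ : ℤ →ᵇ (ℝ × ℝ) := hC.fixedPoint with hφdef
  have hfix : T φ = φ := hC.fixedPoint_isFixedPt
  refine ⟨⇑φ, ⟨⟨‖φ‖, fun i => φ.norm_coe_le_norm i⟩, ?_⟩, ?_⟩
  · intro i
    have h : φ i = F ⇑φ i := by
      conv_lhs => rw [← hfix]
      exact hTcoe φ i
    exact ⟨congrArg Prod.fst h, congrArg Prod.snd h⟩
  · rintro y ⟨⟨My, hMy⟩, hrel⟩
    set ψ : ℤ →ᵇ (ℝ × ℝ) := BoundedContinuousFunction.ofNormedAddCommGroup y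
      continuous_of_discreteTopology My hMy with hψdef
    have hψfix : Function.IsFixedPt T ψ := by
      apply BoundedContinuousFunction.ext
      intro i
      rw [hTcoe]
      exact Prod.ext (hrel i).1.symm (hrel i).2.symm
    have : ψ = φ := hC.fixedPoint_unique hψfix
    funext i
    have := congrArg (fun h : ℤ →ᵇ (ℝ × ℝ) => h i) this
    exact this
end
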